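/- arXiv:2301.11102 — 6 statements merged into one kernel-verified Lean document; each statement's English description precedes it below -/
import Mathlib

section
/- For every monotone (non-decreasing or non-increasing) sequence (τ_n)_{n∈ℕ} of Bermudan stopping strategies in Θ, the pointwise limit lim_{n→∞} τ_n is again a Bermudan stopping strategy in Θ. -/
open MeasureTheory Filter Set
open scoped ENNReal

variable {Ω : Type*}

/-- `A` belongs to the σ-algebra `F_τ` associated with the (stopping) time `τ`. -/
def MeasAtTime {m0 : MeasurableSpace Ω} (F : Filtration ℝ m0) (τ : Ω → ℝ) (A : Set Ω) : Prop :=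
  ∀ t : ℝ, MeasurableSet[F t] (A ∩ {ω | τ ω ≤ t})

/-- `f` is `F_τ`-measurable. -/
def MeasurableAtTime {m0 : MeasurableSpace Ω} (F : Filtration ℝ m0) (τ : Ω → ℝ)
    (f : Ω → ℝ) : Prop :=
  ∀ B : Set ℝ, MeasurableSet B → MeasAtTime F τ (f ⁻¹' B)

/-- Bermudan stopping strategies: stopping times which, a.s., take the value `T`
or one of the values `θ k`. -/
def InBermudan {m0 : MeasurableSpace Ω} (F : Filtration ℝ m0) (μ : Measure Ω)
    (T : ℝ) (θ : ℕ → Ω → ℝ) (τ : Ω → ℝ) : Prop :=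
  IsStoppingTime F (fun ω => (τ ω : WithTop ℝ)) ∧ ∀ᵐ ω ∂μ, τ ω = T ∨ ∃ k, τ ω = θ k ω

/-- Admissible family of random variables indexed by Bermudan stopping strategies. -/
def AdmissibleFam {m0 : MeasurableSpace Ω} (F : Filtration ℝ m0) (μ : Measure Ω)
    (T : ℝ) (θ : ℕ → Ω → ℝ) (φ : (Ω → ℝ) → Ω → ℝ) : Prop :=
  (∀ τ, InBermudan F μ T θ τ → MeasurableAtTime F τ (φ τ)) ∧
  ∀ τ τ', InBermudan F μ T θ τ → InBermudan F μ T θ τ' →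
    ∀ᵐ ω ∂μ, τ ω = τ' ω → φ τ ω = φ τ' ω

/-- p-integrability of a family. -/
def PIntFam {m0 : MeasurableSpace Ω} (F : Filtration ℝ m0) (μ : Measure Ω)
    (T : ℝ) (θ : ℕ → Ω → ℝ) (p : ℝ≥0∞) (φ : (Ω → ℝ) → Ω → ℝ) : Prop :=
  ∀ τ, InBermudan F μ T θ τ → MemLp (φ τ) p μ

/-- `v` is an essential supremum of the set `s` of random variables. -/
def IsEssSupFam {m0 : MeasurableSpace Ω} (μ : Measure Ω) (s : Set (Ω → ℝ)) (v : Ω → ℝ) : Prop :=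
  (∀ f ∈ s, f ≤ᵐ[μ] v) ∧ ∀ w : Ω → ℝ, (∀ f ∈ s, f ≤ᵐ[μ] w) → v ≤ᵐ[μ] w

/-- `V` is the value family: `V ν = ess sup_{τ ∈ Θ_ν} ρ_{ν,τ}[ξ(τ)]`,
with `V ν` chosen `F_ν`-measurable. -/
def IsValueFam {m0 : MeasurableSpace Ω} (F : Filtration ℝ m0) (μ : Measure Ω)
    (T : ℝ) (θ : ℕ → Ω → ℝ) (ρ : (Ω → ℝ) → (Ω → ℝ) → (Ω → ℝ) → Ω → ℝ)
    (ξ V : (Ω → ℝ) → Ω → ℝ) : Prop :=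
  ∀ ν, InBermudan F μ T θ ν →
    MeasurableAtTime F ν (V ν) ∧
    IsEssSupFam μ
      {g | ∃ τ, InBermudan F μ T θ τ ∧ ν ≤ᵐ[μ] τ ∧ g = ρ ν τ (ξ τ)} (V ν)

/-- Property (ii): admissibility of the operators `ρ`. -/
def RhoAdmissible {m0 : MeasurableSpace Ω} (F : Filtration ℝ m0) (μ : Measure Ω)
    (T : ℝ) (θ : ℕ → Ω → ℝ) (p : ℝ≥0∞)
    (ρ : (Ω → ℝ) → (Ω → ℝ) → (Ω → ℝ) → Ω → ℝ) : Prop :=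
  ∀ S S' τ η, InBermudan F μ T θ S → InBermudan F μ T θ S' → InBermudan F μ T θ τ →
    MeasurableAtTime F τ η → MemLp η p μ →
    ∀ᵐ ω ∂μ, S ω = S' ω → ρ S τ η ω = ρ S' τ η ω

/-- Property (iii): knowledge preservation: `ρ_{τ,S}[η] = η` for `F_S`-measurable `η`,
`τ ∈ Θ_S`. -/
def RhoKnowledge {m0 : MeasurableSpace Ω} (F : Filtration ℝ m0) (μ : Measure Ω)
    (T : ℝ) (θ : ℕ → Ω → ℝ) (p : ℝ≥0∞)
    (ρ : (Ω → ℝ) → (Ω → ℝ) → (Ω → ℝ) → Ω → ℝ) : Prop :=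
  ∀ S τ η, InBermudan F μ T θ S → InBermudan F μ T θ τ → S ≤ᵐ[μ] τ →
    MeasurableAtTime F S η → MemLp η p μ → ρ τ S η =ᵐ[μ] η

/-- Property (iv): monotonicity of `ρ`. -/
def RhoMonotone {m0 : MeasurableSpace Ω} (F : Filtration ℝ m0) (μ : Measure Ω)
    (T : ℝ) (θ : ℕ → Ω → ℝ) (p : ℝ≥0∞)
    (ρ : (Ω → ℝ) → (Ω → ℝ) → (Ω → ℝ) → Ω → ℝ) : Prop :=
  ∀ S τ η₁ η₂, InBermudan F μ T θ S → InBermudan F μ T θ τ →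
    MeasurableAtTime F τ η₁ → MemLp η₁ p μ →
    MeasurableAtTime F τ η₂ → MemLp η₂ p μ →
    η₁ ≤ᵐ[μ] η₂ → ρ S τ η₁ ≤ᵐ[μ] ρ S τ η₂

/-- Strict monotonicity of `ρ`. -/
def RhoStrictMonotone {m0 : MeasurableSpace Ω} (F : Filtration ℝ m0) (μ : Measure Ω)
    (T : ℝ) (θ : ℕ → Ω → ℝ) (p : ℝ≥0∞)
    (ρ : (Ω → ℝ) → (Ω → ℝ) → (Ω → ℝ) → Ω → ℝ) : Prop :=
  RhoMonotone F μ T θ p ρ ∧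
  ∀ S τ η₁ η₂, InBermudan F μ T θ S → InBermudan F μ T θ τ →
    MeasurableAtTime F τ η₁ → MemLp η₁ p μ →
    MeasurableAtTime F τ η₂ → MemLp η₂ p μ →
    η₁ ≤ᵐ[μ] η₂ → ρ S τ η₁ =ᵐ[μ] ρ S τ η₂ → η₁ =ᵐ[μ] η₂

/-- Property (v): consistency of `ρ`. -/
def RhoConsistent {m0 : MeasurableSpace Ω} (F : Filtration ℝ m0) (μ : Measure Ω)
    (T : ℝ) (θ : ℕ → Ω → ℝ) (p : ℝ≥0∞)
    (ρ : (Ω → ℝ) → (Ω → ℝ) → (Ω → ℝ) → Ω → ℝ) : Prop :=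
  ∀ S σ τ η, InBermudan F μ T θ S → InBermudan F μ T θ σ → InBermudan F μ T θ τ →
    S ≤ᵐ[μ] σ → σ ≤ᵐ[μ] τ →
    MeasurableAtTime F τ η → MemLp η p μ →
    ρ S σ (ρ σ τ η) =ᵐ[μ] ρ S τ η

/-- Property (vi): "generalized zero-one law" of `ρ` along the family `ξ`. -/
def RhoZeroOneFor {m0 : MeasurableSpace Ω} (F : Filtration ℝ m0) (μ : Measure Ω)
    (T : ℝ) (θ : ℕ → Ω → ℝ) (ρ : (Ω → ℝ) → (Ω → ℝ) → (Ω → ℝ) → Ω → ℝ)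
    (ξ : (Ω → ℝ) → Ω → ℝ) : Prop :=
  ∀ S τ τ' A, InBermudan F μ T θ S → InBermudan F μ T θ τ → InBermudan F μ T θ τ' →
    S ≤ᵐ[μ] τ → S ≤ᵐ[μ] τ' → MeasAtTime F S A →
    (∀ᵐ ω ∂μ, ω ∈ A → τ ω = τ' ω) →
    ∀ᵐ ω ∂μ, ω ∈ A → ρ S τ (ξ τ) ω = ρ S τ' (ξ τ') ω

/-- Property (vii): monotone Fatou property of `ρ` with respect to the terminal condition. -/
def RhoFatou {m0 : MeasurableSpace Ω} (F : Filtration ℝ m0) (μ : Measure Ω)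
    (T : ℝ) (θ : ℕ → Ω → ℝ) (p : ℝ≥0∞)
    (ρ : (Ω → ℝ) → (Ω → ℝ) → (Ω → ℝ) → Ω → ℝ) : Prop :=
  ∀ S τ, InBermudan F μ T θ S → InBermudan F μ T θ τ → S ≤ᵐ[μ] τ →
    ∀ (η : ℕ → Ω → ℝ) (ηlim : Ω → ℝ),
      (∀ n, MeasurableAtTime F τ (η n) ∧ MemLp (η n) p μ) →
      (∀ n, η n ≤ᵐ[μ] η (n + 1)) →
      MemLp ηlim p μ →
      (∀ᵐ ω ∂μ, Tendsto (fun n => η n ω) atTop (nhds (ηlim ω))) →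
      ∀ᵐ ω ∂μ, ρ S τ ηlim ω ≤ Filter.liminf (fun n => ρ S τ (η n) ω) atTop

/-- Property (i): `ρ_{S,τ}` maps `L^p(F_τ)` to `L^p(F_S)`. -/
def RhoLp {m0 : MeasurableSpace Ω} (F : Filtration ℝ m0) (μ : Measure Ω)
    (T : ℝ) (θ : ℕ → Ω → ℝ) (p : ℝ≥0∞)
    (ρ : (Ω → ℝ) → (Ω → ℝ) → (Ω → ℝ) → Ω → ℝ) : Prop :=
  ∀ S τ η, InBermudan F μ T θ S → InBermudan F μ T θ τ →
    MeasurableAtTime F τ η → MemLp η p μ →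
    MeasurableAtTime F S (ρ S τ η) ∧ MemLp (ρ S τ η) p μ

/-- `(Θ,ρ)`-supermartingale family. -/
def SupermartFam {m0 : MeasurableSpace Ω} (F : Filtration ℝ m0) (μ : Measure Ω)
    (T : ℝ) (θ : ℕ → Ω → ℝ) (p : ℝ≥0∞)
    (ρ : (Ω → ℝ) → (Ω → ℝ) → (Ω → ℝ) → Ω → ℝ)
    (φ : (Ω → ℝ) → Ω → ℝ) : Prop :=
  AdmissibleFam F μ T θ φ ∧ PIntFam F μ T θ p φ ∧
  ∀ σ τ, InBermudan F μ T θ σ → InBermudan F μ T θ τ → σ ≤ᵐ[μ] τ →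
    ρ σ τ (φ τ) ≤ᵐ[μ] φ σ

/-- `(Θ,ρ)`-martingale family. -/
def MartFam {m0 : MeasurableSpace Ω} (F : Filtration ℝ m0) (μ : Measure Ω)
    (T : ℝ) (θ : ℕ → Ω → ℝ) (p : ℝ≥0∞)
    (ρ : (Ω → ℝ) → (Ω → ℝ) → (Ω → ℝ) → Ω → ℝ)
    (φ : (Ω → ℝ) → Ω → ℝ) : Prop :=
  AdmissibleFam F μ T θ φ ∧ PIntFam F μ T θ p φ ∧
  ∀ σ τ, InBermudan F μ T θ σ → InBermudan F μ T θ τ → σ ≤ᵐ[μ] τ →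
    ρ σ τ (φ τ) =ᵐ[μ] φ σ

/-- Bermudan stopping strategies in partition form. -/
def InBermudanPart {m0 : MeasurableSpace Ω} (F : Filtration ℝ m0)
    (T : ℝ) (θ : ℕ → Ω → ℝ) (τ : Ω → ℝ) : Prop :=
  IsStoppingTime F (fun ω => (τ ω : WithTop ℝ)) ∧ ∃ (A : ℕ → Set Ω) (Abar : Set Ω),
    Pairwise (Function.onFun Disjoint A) ∧ (∀ k, Disjoint (A k) Abar) ∧
    ((⋃ k, A k) ∪ Abar = Set.univ) ∧
    (∀ k, MeasAtTime F (θ k) (A k)) ∧ MeasurableSet[F T] Abar ∧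
    (∀ k, ∀ ω ∈ A k, τ ω = θ k ω) ∧ (∀ ω ∈ Abar, τ ω = T)


theorem bermudan_closed_under_monotone_limits
    {m0 : MeasurableSpace Ω} (F : Filtration ℝ m0) (μ : Measure Ω)
    (T : ℝ) (hT : 0 < T) (θ : ℕ → Ω → ℝ)
    (hθstop : ∀ k, IsStoppingTime F (fun ω => (θ k ω : WithTop ℝ)))
    (hθmono : ∀ k ω, θ k ω ≤ θ (k + 1) ω)
    (hθ0 : ∀ ω, θ 0 ω = 0)
    (hθT : ∀ k, ∀ᵐ ω ∂μ, θ k ω ≤ T)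
    (hθlim : ∀ᵐ ω ∂μ, Tendsto (fun k => θ k ω) atTop (nhds T))
    (hFrc : ∀ t : ℝ, (F t : MeasurableSpace Ω) = ⨅ (s : ℝ) (_ : t < s), F s)
    (τs : ℕ → Ω → ℝ) (hτs : ∀ n, InBermudan F μ T θ (τs n))
    (hmono : (∀ ω, Monotone fun n => τs n ω) ∨ (∀ ω, Antitone fun n => τs n ω))
    (τlim : Ω → ℝ)
    (hlim : ∀ ω, Tendsto (fun n => τs n ω) atTop (nhds (τlim ω))) :
    InBermudan F μ T θ τlim := by
  constructor
  · -- τlim is a stopping time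
    rcases hmono with hinc | hdec
    · -- non-decreasing case: τlim = sup, no right-continuity needed
      intro t
      simp only [WithTop.coe_le_coe]
      have hset : {ω | τlim ω ≤ t} = ⋂ n, {ω | τs n ω ≤ t} := by
        ext ω
        simp only [mem_iInter, mem_setOf_eq]
        constructor
        · intro h n
          exact le_trans ((hinc ω).ge_of_tendsto (hlim ω) n) h
        · intro h
          exact le_of_tendsto' (hlim ω) h
      rw [hset]
      exact MeasurableSet.iInter fun n => (by simpa using (hτs n).1 t)
    · -- non-increasing case: use right-continuity of the filtration
      intro t
      simp only [WithTop.coe_le_coe]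
      have key : ∀ s : ℝ, t < s → MeasurableSet[F s] {ω | τlim ω ≤ t} := by
        intro s hs
        have hset : {ω | τlim ω ≤ t}
            = ⋂ (q : {q : ℚ // t < (q : ℝ) ∧ (q : ℝ) < s}), ⋃ n, {ω | τs n ω ≤ (q : ℝ)} := by
          ext ω
          simp only [mem_iInter, mem_iUnion, mem_setOf_eq]
          constructor
          · rintro h ⟨q, hq1, hq2⟩
            have hev : ∀ᶠ n in atTop, τs n ω < (q : ℝ) :=
              (hlim ω).eventually (gt_mem_nhds (lt_of_le_of_lt h hq1))
            obtain ⟨n, hn⟩ := hev.exists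
            exact ⟨n, hn.le⟩
          · intro h
            by_contra hc
            push_neg at hc
            obtain ⟨q, hq1, hq2⟩ := exists_rat_btwn (lt_min hs hc)
            obtain ⟨n, hn⟩ := h ⟨q, hq1, hq2.trans_le (min_le_left _ _)⟩
            have hle : τlim ω ≤ τs n ω := (hdec ω).le_of_tendsto (hlim ω) n
            exact absurd (hle.trans hn) (not_le.mpr (hq2.trans_le (min_le_right _ _)))
        rw [hset]
        exact MeasurableSet.iInter fun q =>
          MeasurableSet.iUnion fun n => F.mono q.2.2.le _ (by simpa using (hτs n).1 (q : ℝ))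
      rw [show (F t : MeasurableSpace Ω) = ⨅ (s : ℝ) (_ : t < s), F s from hFrc t]
      rw [MeasurableSpace.measurableSet_iInf]
      intro s
      rw [MeasurableSpace.measurableSet_iInf]
      exact fun hts => key s hts
  · -- τlim a.s. takes the value T or one of the values θ k
    have h1 : ∀ᵐ ω ∂μ, ∀ n, τs n ω = T ∨ ∃ k, τs n ω = θ k ω :=
      ae_all_iff.mpr fun n => (hτs n).2
    filter_upwards [h1, hθlim] with ω hω hθω
    have hcl : IsClosed (insert T (Set.range fun k => θ k ω)) :=
      hθω.isCompact_insert_range.isClosed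
    have hmem : τlim ω ∈ insert T (Set.range fun k => θ k ω) := by
      refine hcl.mem_of_tendsto (hlim ω) (Filter.Eventually.of_forall fun n => ?_)
      rcases hω n with h | ⟨k, hk⟩
      · exact h ▸ Set.mem_insert _ _
      · exact Set.mem_insert_of_mem _ ⟨k, hk.symm⟩
    rcases hmem with h | ⟨k, hk⟩
    · exact Or.inl h
    · exact Or.inr ⟨k, hk.symm⟩
end

section
/- Every admissible family (φ(τ), τ ∈ Θ) is right-continuous along Bermudan stopping times: for all τ ∈ Θ and every non-increasing sequence (τ_n) ∈ Θ^ℕ with τ_n ↓ τ a.s., one has lim_{n→∞} φ(τ_n) = φ(τ) a.s. -/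
open MeasureTheory Filter Set
open scoped ENNReal

variable {Ω : Type*}

theorem admissible_family_right_continuous
    {m0 : MeasurableSpace Ω} (F : Filtration ℝ m0) (μ : Measure Ω)
    (T : ℝ) (hT : 0 < T) (θ : ℕ → Ω → ℝ)
    (hθstop : ∀ k, IsStoppingTime F (fun ω => (θ k ω : WithTop ℝ)))
    (hθmono : ∀ k ω, θ k ω ≤ θ (k + 1) ω)
    (hθ0 : ∀ ω, θ 0 ω = 0)
    (hθT : ∀ k, ∀ᵐ ω ∂μ, θ k ω ≤ T)
    (hθlim : ∀ᵐ ω ∂μ, Tendsto (fun k => θ k ω) atTop (nhds T))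
    (φ : (Ω → ℝ) → Ω → ℝ) (hφ : AdmissibleFam F μ T θ φ)
    (τ : Ω → ℝ) (hτ : InBermudan F μ T θ τ)
    (τs : ℕ → Ω → ℝ) (hτs : ∀ n, InBermudan F μ T θ (τs n))
    (hdecr : ∀ ω, Antitone fun n => τs n ω)
    (hge : ∀ n, τ ≤ᵐ[μ] τs n)
    (hlim : ∀ᵐ ω ∂μ, Tendsto (fun n => τs n ω) atTop (nhds (τ ω))) :
    ∀ᵐ ω ∂μ, Tendsto (fun n => φ (τs n) ω) atTop (nhds (φ τ ω)) := by
  have h2 : ∀ᵐ ω ∂μ, ∀ n, (τs n ω = T ∨ ∃ k, τs n ω = θ k ω) ∧ τ ω ≤ τs n ω := by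
    rw [ae_all_iff]; intro n
    filter_upwards [(hτs n).2, hge n] with ω h h' using ⟨h, h'⟩
  have h3 : ∀ᵐ ω ∂μ, ∀ k, θ k ω ≤ T := ae_all_iff.2 hθT
  have h4 : ∀ᵐ ω ∂μ, ∀ n, τ ω = τs n ω → φ τ ω = φ (τs n) ω := by
    rw [ae_all_iff]; intro n
    exact hφ.2 τ (τs n) hτ (hτs n)
  filter_upwards [h2, h3, h4, hlim] with ω hω2 hω3 hω4 hωlim
  have hθm : Monotone fun j => θ j ω := monotone_nat_of_le_succ fun j => hθmono j ω
  have hle : ∀ n, τs n ω ≤ T := by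
    intro n
    rcases (hω2 n).1 with h | ⟨k, hk⟩
    · exact h.le
    · exact hk ▸ hω3 k
  have key : ∀ᶠ n in atTop, τs n ω = τ ω := by
    by_cases hTc : T ≤ τ ω
    · exact Eventually.of_forall fun n => le_antisymm ((hle n).trans hTc) (hω2 n).2
    · push_neg at hTc
      obtain ⟨ε, hε, hgap⟩ : ∃ ε > 0, ∀ x, (x = T ∨ ∃ j, x = θ j ω) → τ ω < x → τ ω + ε ≤ x := by
        by_cases hj : ∃ j, τ ω < θ j ω
        · set j0 := Nat.find hj with hj0def
          have hj0 : τ ω < θ j0 ω := Nat.find_spec hj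
          refine ⟨min (θ j0 ω - τ ω) (T - τ ω), by
            simp only [lt_min_iff]; constructor <;> linarith, ?_⟩
          intro x hx hxgt
          rcases hx with h | ⟨j, h⟩ <;> rw [h] at hxgt ⊢
          · have := min_le_right (θ j0 ω - τ ω) (T - τ ω); linarith
          · have hjge : j0 ≤ j := by
              by_contra hcon
              push_neg at hcon
              exact absurd hxgt (Nat.find_min hj hcon)
            have := hθm hjge
            have := min_le_left (θ j0 ω - τ ω) (T - τ ω)
            linarith
        · push_neg at hj
          refine ⟨T - τ ω, by linarith, ?_⟩
          intro x hx hxgt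
          rcases hx with h | ⟨j, h⟩ <;> rw [h] at hxgt ⊢
          · linarith
          · exact absurd hxgt (not_lt.2 (hj j))
      have hev : ∀ᶠ n in atTop, τs n ω < τ ω + ε :=
        hωlim.eventually_lt_const (by linarith)
      filter_upwards [hev] with n hn
      rcases eq_or_lt_of_le (hω2 n).2 with h | h
      · exact h.symm
      · exact absurd (hgap _ (hω2 n).1 h) (by linarith)
  have hevφ : ∀ᶠ n in atTop, φ (τs n) ω = φ τ ω :=
    key.mono fun n hn => (hω4 n hn.symm).symm
  exact Tendsto.congr' (by filter_upwards [hevφ] with n h using h.symm) tendsto_const_nhds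
end

section
/- Under the assumptions of admissibility (ρ_{S,τ}[η] = ρ_{S',τ}[η] a.s. on {S = S'}) and the generalized zero-one law (1_A·ρ_{S,τ}[ξ(τ)] = 1_A·ρ_{S,τ'}[ξ(τ')] for all A ∈ F_S and τ, τ' ∈ Θ_S with τ = τ' on A) on the non-linear operators ρ, the value family V = (V(ν), ν ∈ Θ), where V(ν) := ess sup_{τ∈Θ_ν} ρ_{ν,τ}[ξ(τ)], is admissible: V(ν) is F_ν-measurable for each ν ∈ Θ, and V(ν) = V(ν') a.s. on {ν = ν'} for all ν, ν' ∈ Θ. -/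
open MeasureTheory Filter Set
open scoped ENNReal

variable {Ω : Type*}

lemma value_family_le_aux
    {m0 : MeasurableSpace Ω} (F : Filtration ℝ m0) (μ : Measure Ω)
    (T : ℝ) (θ : ℕ → Ω → ℝ)
    (p : ℝ≥0∞) (ρ : (Ω → ℝ) → (Ω → ℝ) → (Ω → ℝ) → Ω → ℝ)
    (ξ : (Ω → ℝ) → Ω → ℝ) (hξ : AdmissibleFam F μ T θ ξ) (hξp : PIntFam F μ T θ p ξ)
    (hρadm : RhoAdmissible F μ T θ p ρ)
    (hρ01 : RhoZeroOneFor F μ T θ ρ ξ)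
    (V : (Ω → ℝ) → Ω → ℝ) (hV : IsValueFam F μ T θ ρ ξ V)
    (ν ν' : Ω → ℝ) (hν : InBermudan F μ T θ ν) (hν' : InBermudan F μ T θ ν') :
    ∀ᵐ ω ∂μ, ν ω = ν' ω → V ν ω ≤ V ν' ω := by
  set A : Set Ω := {ω | ν ω = ν' ω} with hA_def
  have hAν : MeasAtTime F ν A := fun t => by
    have h := (hν.1.measurableSet_eq_stopping_time hν'.1).2 t
    show MeasurableSet[F t] ({ω | ν ω = ν' ω} ∩ {ω | ν ω ≤ t})
    simpa only [WithTop.coe_le_coe, WithTop.coe_eq_coe] using h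
  set w : Ω → ℝ := fun ω => if ν ω = ν' ω then V ν' ω else V ν ω with hw_def
  have hVν := (hV ν hν).2
  have hVν' := (hV ν' hν').2
  have hub : ∀ f ∈ {g | ∃ τ, InBermudan F μ T θ τ ∧ ν ≤ᵐ[μ] τ ∧ g = ρ ν τ (ξ τ)},
      f ≤ᵐ[μ] w := by
    rintro f ⟨τ, hτ, hντ, rfl⟩
    set σ : Ω → ℝ := fun ω => max (τ ω) (ν' ω) with hσ_def
    have hσ : InBermudan F μ T θ σ := by
      refine ⟨by simpa only [hσ_def, WithTop.coe_max] using hτ.1.max hν'.1, ?_⟩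
      filter_upwards [hτ.2, hν'.2] with ω h1 h2
      rcases max_choice (τ ω) (ν' ω) with h | h <;> simp only [hσ_def, h] <;> assumption
    have hνσ : ν ≤ᵐ[μ] σ := by
      filter_upwards [hντ] with ω h; exact h.trans (le_max_left _ _)
    have hν'σ : ν' ≤ᵐ[μ] σ := Filter.Eventually.of_forall fun ω => le_max_right _ _
    have h1 : ∀ᵐ ω ∂μ, ω ∈ A → ρ ν τ (ξ τ) ω = ρ ν σ (ξ σ) ω := by
      refine hρ01 ν τ σ A hν hτ hσ hντ hνσ hAν ?_
      filter_upwards [hντ] with ω h hmem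
      have hle : ν' ω ≤ τ ω := by rw [← hmem]; exact h
      simp [hσ_def, max_eq_left hle]
    have h2 : ∀ᵐ ω ∂μ, ν ω = ν' ω → ρ ν σ (ξ σ) ω = ρ ν' σ (ξ σ) ω :=
      hρadm ν ν' σ (ξ σ) hν hν' hσ (hξ.1 σ hσ) (hξp σ hσ)
    have h3 : ρ ν' σ (ξ σ) ≤ᵐ[μ] V ν' := hVν'.1 _ ⟨σ, hσ, hν'σ, rfl⟩
    have h4 : ρ ν τ (ξ τ) ≤ᵐ[μ] V ν := hVν.1 _ ⟨τ, hτ, hντ, rfl⟩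
    filter_upwards [h1, h2, h3, h4] with ω h1 h2 h3 h4
    by_cases hm : ν ω = ν' ω
    · simp only [hw_def, if_pos hm]
      calc ρ ν τ (ξ τ) ω = ρ ν σ (ξ σ) ω := h1 hm
        _ = ρ ν' σ (ξ σ) ω := h2 hm
        _ ≤ V ν' ω := h3
    · simpa only [hw_def, if_neg hm] using h4
  have hle : V ν ≤ᵐ[μ] w := hVν.2 w hub
  filter_upwards [hle] with ω hle hm
  simpa only [hw_def, if_pos hm] using hle

theorem value_family_admissible
    {m0 : MeasurableSpace Ω} (F : Filtration ℝ m0) (μ : Measure Ω)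
    (T : ℝ) (hT : 0 < T) (θ : ℕ → Ω → ℝ)
    (hθstop : ∀ k, IsStoppingTime F (fun ω => (θ k ω : WithTop ℝ)))
    (hθmono : ∀ k ω, θ k ω ≤ θ (k + 1) ω)
    (hθ0 : ∀ ω, θ 0 ω = 0)
    (hθT : ∀ k, ∀ᵐ ω ∂μ, θ k ω ≤ T)
    (hθlim : ∀ᵐ ω ∂μ, Tendsto (fun k => θ k ω) atTop (nhds T))
    (p : ℝ≥0∞) (hp : 1 ≤ p) (ρ : (Ω → ℝ) → (Ω → ℝ) → (Ω → ℝ) → Ω → ℝ)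
    (ξ : (Ω → ℝ) → Ω → ℝ) (hξ : AdmissibleFam F μ T θ ξ) (hξp : PIntFam F μ T θ p ξ)
    (hρadm : RhoAdmissible F μ T θ p ρ)
    (hρ01 : RhoZeroOneFor F μ T θ ρ ξ)
    (V : (Ω → ℝ) → Ω → ℝ) (hV : IsValueFam F μ T θ ρ ξ V) :
    AdmissibleFam F μ T θ V := by
  refine ⟨fun τ hτ => (hV τ hτ).1, fun ν ν' hν hν' => ?_⟩
  have h1 := value_family_le_aux F μ T θ p ρ ξ hξ hξp hρadm hρ01 V hV ν ν' hν hν'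
  have h2 := value_family_le_aux F μ T θ p ρ ξ hξ hξp hρadm hρ01 V hV ν' ν hν' hν
  filter_upwards [h1, h2] with ω h1 h2 hm
  exact le_antisymm (h1 hm) (h2 hm.symm)
end

section
/- If ρ satisfies admissibility, knowledge preservation, generalized zero-one law, monotonicity, and there exists a p-integrable (Θ,ρ)-martingale family M with ξ(τ) ≤ M(τ) a.s. for all τ ∈ Θ, then ξ(S) ≤ V(S) ≤ M(S) a.s. for all S ∈ Θ; in particular V(S) ∈ L^p for all S ∈ Θ. -/
open MeasureTheory Filter Set
open scoped ENNReal

variable {Ω : Type*}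

lemma measurableAtTime_measurable {m0 : MeasurableSpace Ω} {F : Filtration ℝ m0}
    {τ : Ω → ℝ} {f : Ω → ℝ} (h : MeasurableAtTime F τ f) : Measurable f := by
  intro B hB
  have : f ⁻¹' B = ⋃ n : ℕ, (f ⁻¹' B ∩ {ω | τ ω ≤ (n : ℝ)}) := by
    ext ω
    simp only [Set.mem_iUnion, Set.mem_inter_iff, Set.mem_setOf_eq]
    constructor
    · intro hω
      obtain ⟨n, hn⟩ := exists_nat_ge (τ ω)
      exact ⟨n, hω, hn⟩
    · rintro ⟨n, hω, -⟩; exact hω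
  rw [this]
  exact MeasurableSet.iUnion fun n => F.le _ _ (h B hB n)


theorem value_sandwiched_by_martingale
    {m0 : MeasurableSpace Ω} (F : Filtration ℝ m0) (μ : Measure Ω)
    (T : ℝ) (hT : 0 < T) (θ : ℕ → Ω → ℝ)
    (hθstop : ∀ k, IsStoppingTime F (fun ω => (θ k ω : WithTop ℝ)))
    (hθmono : ∀ k ω, θ k ω ≤ θ (k + 1) ω)
    (hθ0 : ∀ ω, θ 0 ω = 0)
    (hθT : ∀ k, ∀ᵐ ω ∂μ, θ k ω ≤ T)
    (hθlim : ∀ᵐ ω ∂μ, Tendsto (fun k => θ k ω) atTop (nhds T))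
    (p : ℝ≥0∞) (hp : 1 ≤ p) (ρ : (Ω → ℝ) → (Ω → ℝ) → (Ω → ℝ) → Ω → ℝ)
    (ξ : (Ω → ℝ) → Ω → ℝ) (hξ : AdmissibleFam F μ T θ ξ) (hξp : PIntFam F μ T θ p ξ)
    (hρadm : RhoAdmissible F μ T θ p ρ)
    (hρknow : RhoKnowledge F μ T θ p ρ)
    (hρmono : RhoMonotone F μ T θ p ρ)
    (hρ01 : RhoZeroOneFor F μ T θ ρ ξ)
    (M : (Ω → ℝ) → Ω → ℝ) (hM : MartFam F μ T θ p ρ M)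
    (hMdom : ∀ τ, InBermudan F μ T θ τ → ξ τ ≤ᵐ[μ] M τ)
    (V : (Ω → ℝ) → Ω → ℝ) (hV : IsValueFam F μ T θ ρ ξ V) :
    ∀ S, InBermudan F μ T θ S →
      ξ S ≤ᵐ[μ] V S ∧ V S ≤ᵐ[μ] M S ∧ MemLp (V S) p μ := by
  intro S hS
  obtain ⟨hVmeas, hVub, hVlb⟩ := hV S hS
  obtain ⟨hMadm, hMp, hMmart⟩ := hM
  -- ξ S ≤ V S
  have hSleS : S ≤ᵐ[μ] S := Filter.Eventually.of_forall fun ω => le_rfl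
  have hmem : ρ S S (ξ S) ∈
      {g | ∃ τ, InBermudan F μ T θ τ ∧ S ≤ᵐ[μ] τ ∧ g = ρ S τ (ξ τ)} :=
    ⟨S, hS, hSleS, rfl⟩
  have hknow : ρ S S (ξ S) =ᵐ[μ] ξ S :=
    hρknow S S (ξ S) hS hS hSleS (hξ.1 S hS) (hξp S hS)
  have h1 : ξ S ≤ᵐ[μ] V S := by
    filter_upwards [hVub _ hmem, hknow] with ω h hk
    rw [← hk]; exact h
  -- V S ≤ M S
  have h2 : V S ≤ᵐ[μ] M S := by
    refine hVlb (M S) ?_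
    rintro g ⟨τ, hτ, hSτ, rfl⟩
    have hmonoS : ρ S τ (ξ τ) ≤ᵐ[μ] ρ S τ (M τ) :=
      hρmono S τ (ξ τ) (M τ) hS hτ (hξ.1 τ hτ) (hξp τ hτ)
        (hMadm.1 τ hτ) (hMp τ hτ) (hMdom τ hτ)
    have hmart : ρ S τ (M τ) =ᵐ[μ] M S := hMmart S τ hS hτ hSτ
    filter_upwards [hmonoS, hmart] with ω ha hb
    exact ha.trans hb.le
  refine ⟨h1, h2, ?_⟩
  -- MemLp
  have hVm : AEStronglyMeasurable (V S) μ :=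
    (measurableAtTime_measurable hVmeas).aestronglyMeasurable
  have hg : MemLp (fun ω => |ξ S ω| + |M S ω|) p μ :=
    ((hξp S hS).abs).add ((hMp S hS).abs)
  refine hg.mono hVm ?_
  filter_upwards [h1, h2] with ω ha hb
  have : |V S ω| ≤ |ξ S ω| + |M S ω| := by
    rcases abs_cases (V S ω) with ⟨h, -⟩ | ⟨h, -⟩
    · calc |V S ω| = V S ω := h
        _ ≤ |M S ω| := hb.trans (le_abs_self _)
        _ ≤ _ := le_add_of_nonneg_left (abs_nonneg _)
    · calc |V S ω| = -(V S ω) := h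
        _ ≤ -(ξ S ω) := by linarith
        _ ≤ |ξ S ω| := neg_le_abs _
        _ ≤ _ := le_add_of_nonneg_right (abs_nonneg _)
  simpa [Real.norm_eq_abs] using this.trans (le_abs_self _)
end

section
/- Under knowledge preservation and the generalized zero-one law on ρ, the value at θ_k satisfies V(θ_k) = ξ(θ_k) ∨ V⁺(θ_k) a.s., where V⁺(θ_k) := ess sup_{τ∈Θ_{θ_{k+1}}} ρ_{θ_k,τ}[ξ(τ)]. -/
open MeasureTheory Filter Set
open scoped ENNReal

variable {Ω : Type*}

theorem value_eq_payoff_sup_strict_value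
    {m0 : MeasurableSpace Ω} (F : Filtration ℝ m0) (μ : Measure Ω)
    (T : ℝ) (hT : 0 < T) (θ : ℕ → Ω → ℝ)
    (hθstop : ∀ k, IsStoppingTime F (fun ω => (θ k ω : WithTop ℝ)))
    (hθmono : ∀ k ω, θ k ω ≤ θ (k + 1) ω)
    (hθ0 : ∀ ω, θ 0 ω = 0)
    (hθT : ∀ k, ∀ᵐ ω ∂μ, θ k ω ≤ T)
    (hθlim : ∀ᵐ ω ∂μ, Tendsto (fun k => θ k ω) atTop (nhds T))
    (p : ℝ≥0∞) (hp : 1 ≤ p) (ρ : (Ω → ℝ) → (Ω → ℝ) → (Ω → ℝ) → Ω → ℝ)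
    (ξ : (Ω → ℝ) → Ω → ℝ) (hξ : AdmissibleFam F μ T θ ξ) (hξp : PIntFam F μ T θ p ξ)
    (hρknow : RhoKnowledge F μ T θ p ρ)
    (hρ01 : RhoZeroOneFor F μ T θ ρ ξ)
    (V : (Ω → ℝ) → Ω → ℝ) (hV : IsValueFam F μ T θ ρ ξ V)
    (k : ℕ) (Vplus : Ω → ℝ)
    (hVplus : IsEssSupFam μ
      {g | ∃ τ, InBermudan F μ T θ τ ∧ θ (k + 1) ≤ᵐ[μ] τ ∧ g = ρ (θ k) τ (ξ τ)} Vplus) :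
    V (θ k) =ᵐ[μ] fun ω => max (ξ (θ k) ω) (Vplus ω) := by

  classical
  have hmono : ∀ ω, Monotone fun j => θ j ω := fun ω =>
    monotone_nat_of_le_succ fun j => hθmono j ω
  -- each θ j is in Bermudan
  have hθB : ∀ j, InBermudan F μ T θ (θ j) := fun j =>
    ⟨hθstop j, Filter.Eventually.of_forall fun ω => Or.inr ⟨j, rfl⟩⟩
  obtain ⟨hVmeas, hVub, hVmin⟩ :
      MeasurableAtTime F (θ k) (V (θ k)) ∧ _ ∧ _ := by
    obtain ⟨h1, h2, h3⟩ := hV (θ k) (hθB k)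
    exact ⟨h1, h2, h3⟩
  obtain ⟨hVpub, hVpmin⟩ := hVplus
  -- ρ_{θk,θk}[ξ(θk)] = ξ(θk)
  have hknow : ρ (θ k) (θ k) (ξ (θ k)) =ᵐ[μ] ξ (θ k) :=
    hρknow (θ k) (θ k) (ξ (θ k)) (hθB k) (hθB k) (Filter.Eventually.of_forall fun ω => le_rfl)
      (hξ.1 (θ k) (hθB k)) (hξp (θ k) (hθB k))
  -- ξ(θ k) ≤ V(θ k)
  have hle1 : ξ (θ k) ≤ᵐ[μ] V (θ k) := by
    have := hVub (ρ (θ k) (θ k) (ξ (θ k)))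
      ⟨θ k, hθB k, Filter.Eventually.of_forall fun ω => le_rfl, rfl⟩
    filter_upwards [this, hknow] with ω h1 h2
    rw [← h2]; exact h1
  -- Vplus ≤ V(θ k)
  have hle2 : Vplus ≤ᵐ[μ] V (θ k) := by
    refine hVpmin _ fun g hg => ?_
    obtain ⟨τ, hτB, hτge, rfl⟩ := hg
    refine hVub _ ⟨τ, hτB, ?_, rfl⟩
    filter_upwards [hτge] with ω h
    exact le_trans (hθmono k ω) h
  -- V(θ k) ≤ max
  have hle3 : V (θ k) ≤ᵐ[μ] fun ω => max (ξ (θ k) ω) (Vplus ω) := by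
    refine hVmin _ fun g hg => ?_
    obtain ⟨τ, hτB, hτge, rfl⟩ := hg
    set A : Set Ω := {ω | τ ω ≤ θ k ω} with hA
    have hAmeas' : MeasurableSet[(hθstop k).measurableSpace] A :=
      by
        have h := MeasureTheory.IsStoppingTime.measurableSet_stopping_time_le hτB.1 (hθstop k)
        simp only [WithTop.coe_le_coe] at h; exact h
    have hAmeas : MeasAtTime F (θ k) A := fun t => by
      have h := (((hθstop k).measurableSet A).mp hAmeas').2 t
      simp only [WithTop.coe_le_coe] at h; exact h
    have hAcmeas : MeasAtTime F (θ k) Aᶜ := fun t => by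
      have h := (((hθstop k).measurableSet Aᶜ).mp hAmeas'.compl).2 t
      simp only [WithTop.coe_le_coe] at h; exact h
    -- on A, τ = θ k a.e.
    have hOnA : ∀ᵐ ω ∂μ, ω ∈ A → τ ω = θ k ω := by
      filter_upwards [hτge] with ω h hω
      exact le_antisymm hω h
    have h01A : ∀ᵐ ω ∂μ, ω ∈ A →
        ρ (θ k) τ (ξ τ) ω = ρ (θ k) (θ k) (ξ (θ k)) ω :=
      hρ01 (θ k) τ (θ k) A (hθB k) hτB (hθB k) hτge
        (Filter.Eventually.of_forall fun ω => le_rfl) hAmeas hOnA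
    -- the modified strategy
    set τ' : Ω → ℝ := fun ω => max (τ ω) (θ (k + 1) ω) with hτ'
    have hτ'stop : IsStoppingTime F (fun ω => (τ' ω : WithTop ℝ)) := hτB.1.max (hθstop (k + 1))
    have hτ'B : InBermudan F μ T θ τ' := by
      refine ⟨hτ'stop, ?_⟩
      filter_upwards [hτB.2, hθT (k + 1)] with ω hω hT'
      rcases hω with hωT | ⟨j, hj⟩
      · left; simp only [hτ', hωT]; exact max_eq_left hT'
      · right
        rcases le_total j (k + 1) with hjk | hjk
        · exact ⟨k + 1, by simp [hτ', hj, max_eq_right (hmono ω hjk)]⟩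
        · exact ⟨j, by simp [hτ', hj, max_eq_left (hmono ω hjk)]⟩
    have hτ'ge : θ (k + 1) ≤ᵐ[μ] τ' :=
      Filter.Eventually.of_forall fun ω => le_max_right _ _
    -- on Aᶜ, τ = τ' a.e.
    have hOnAc : ∀ᵐ ω ∂μ, ω ∈ Aᶜ → τ ω = τ' ω := by
      filter_upwards [hτB.2, hθT (k + 1)] with ω hω hT' hωc
      have hgt : θ k ω < τ ω := lt_of_not_ge hωc
      have : θ (k + 1) ω ≤ τ ω := by
        rcases hω with hωT | ⟨j, hj⟩
        · rw [hωT]; exact hT'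
        · rcases le_or_gt j k with hjk | hjk
          · exact absurd (hj ▸ hmono ω hjk : τ ω ≤ θ k ω) (not_le_of_gt hgt)
          · rw [hj]; exact hmono ω hjk
      exact (max_eq_left this).symm
    have h01Ac : ∀ᵐ ω ∂μ, ω ∈ Aᶜ →
        ρ (θ k) τ (ξ τ) ω = ρ (θ k) τ' (ξ τ') ω :=
      hρ01 (θ k) τ τ' Aᶜ (hθB k) hτB hτ'B hτge
        (by filter_upwards [hτ'ge] with ω h; exact le_trans (hθmono k ω) h)
        hAcmeas hOnAc
    have hVp : ρ (θ k) τ' (ξ τ') ≤ᵐ[μ] Vplus :=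
      hVpub _ ⟨τ', hτ'B, hτ'ge, rfl⟩
    filter_upwards [h01A, h01Ac, hknow, hVp] with ω hA' hAc' hk' hVp'
    by_cases hω : ω ∈ A
    · rw [hA' hω, hk']; exact le_max_left _ _
    · rw [hAc' hω]; exact le_trans hVp' (le_max_right _ _)
  filter_upwards [hle1, hle2, hle3] with ω h1 h2 h3
  exact le_antisymm h3 (max_le h1 h2)
end

section
/- (Optimality criterion) Let ν*_k ∈ Θ_{θ_k}. If (i) ρ_{θ_k, ν*_k}[V(ν*_k)] = ρ_{θ_k, ν*_k}[ξ(ν*_k)] a.s. and (ii) the family (V(ν ∧ ν*_k))_{ν∈Θ_{θ_k}} is a (Θ,ρ)-martingale family, then ν*_k is optimal for the problem V(θ_k) = ess sup_{τ∈Θ_{θ_k}} ρ_{θ_k,τ}[ξ(τ)], i.e., V(θ_k) = ρ_{θ_k,ν*_k}[ξ(ν*_k)] a.s. -/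
open MeasureTheory Filter Set
open scoped ENNReal

variable {Ω : Type*}

theorem optimality_criterion
    {m0 : MeasurableSpace Ω} (F : Filtration ℝ m0) (μ : Measure Ω)
    (T : ℝ) (hT : 0 < T) (θ : ℕ → Ω → ℝ)
    (hθstop : ∀ k, IsStoppingTime F (fun ω => (θ k ω : WithTop ℝ)))
    (hθmono : ∀ k ω, θ k ω ≤ θ (k + 1) ω)
    (hθ0 : ∀ ω, θ 0 ω = 0)
    (hθT : ∀ k, ∀ᵐ ω ∂μ, θ k ω ≤ T)
    (hθlim : ∀ᵐ ω ∂μ, Tendsto (fun k => θ k ω) atTop (nhds T))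
    (p : ℝ≥0∞) (hp : 1 ≤ p) (ρ : (Ω → ℝ) → (Ω → ℝ) → (Ω → ℝ) → Ω → ℝ)
    (ξ : (Ω → ℝ) → Ω → ℝ) (hξ : AdmissibleFam F μ T θ ξ) (hξp : PIntFam F μ T θ p ξ)
    (V : (Ω → ℝ) → Ω → ℝ) (hV : IsValueFam F μ T θ ρ ξ V)
    (hVadm : AdmissibleFam F μ T θ V) (hVp : PIntFam F μ T θ p V)
    (k : ℕ) (νstar : Ω → ℝ)
    (hνstar : InBermudan F μ T θ νstar) (hνk : θ k ≤ᵐ[μ] νstar)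
    (hi : ρ (θ k) νstar (V νstar) =ᵐ[μ] ρ (θ k) νstar (ξ νstar))
    (hii : ∀ σ τ, InBermudan F μ T θ σ → InBermudan F μ T θ τ → σ ≤ᵐ[μ] τ →
      ρ σ τ (V (fun ω => min (τ ω) (νstar ω))) =ᵐ[μ] V (fun ω => min (σ ω) (νstar ω))) :
    V (θ k) =ᵐ[μ] ρ (θ k) νstar (ξ νstar) := by
  set ν2 : Ω → ℝ := fun ω => min (θ k ω) (νstar ω) with hν2
  have hθkB : InBermudan F μ T θ (θ k) :=
    ⟨hθstop k, Filter.Eventually.of_forall fun ω => Or.inr ⟨k, rfl⟩⟩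
  have hν2B : InBermudan F μ T θ ν2 := by
    refine ⟨by
      have h := (hθstop k).min hνstar.1
      have e : (fun ω => ((ν2 ω : ℝ) : WithTop ℝ)) = fun ω => min ((θ k ω : ℝ) : WithTop ℝ) ((νstar ω : ℝ) : WithTop ℝ) := by
        funext ω
        simp [hν2]
      rw [e]
      exact h, ?_⟩
    filter_upwards [hνk] with ω hω
    exact Or.inr ⟨k, min_eq_left hω⟩
  have h1 : V (θ k) =ᵐ[μ] V ν2 := by
    have := hVadm.2 (θ k) ν2 hθkB hν2B
    filter_upwards [this, hνk] with ω h hω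
    exact h (min_eq_left hω).symm
  have h2 : ρ (θ k) νstar (V (fun ω => min (νstar ω) (νstar ω))) =ᵐ[μ] V ν2 :=
    hii (θ k) νstar hθkB hνstar hνk
  have h3 : (fun ω => min (νstar ω) (νstar ω)) = νstar := funext fun ω => min_self _
  rw [h3] at h2
  exact h1.trans (h2.symm.trans hi)
end
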